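/- Let S be an infinite set and (f_n) a uniformly bounded sequence of real-valued functions on S. Then (f_n) has a subsequence that either converges pointwise on S, or is equivalent in the sup norm to the standard basis of ℓ¹ (Rosenthal's dichotomy). -/

import Mathlib

open Filter

namespace RosenthalAux

open Set

/-- `t` is an initial segment of the set `N`. -/
def IsSeg (t : Finset ℕ) (N : Set ℕ) : Prop := ∃ c : ℕ, ∀ a : ℕ, a ∈ t ↔ a ∈ N ∧ a < c

variable (Fam : Finset ℕ → Prop)

def Accepts (M : Set ℕ) (s : Finset ℕ) : Prop :=
  ∀ N : Set ℕ, N ⊆ M → N.Infinite → (∀ a ∈ N, ∀ b ∈ s, b < a) →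
    ∃ t : Finset ℕ, IsSeg t N ∧ Fam (s ∪ t)

def Rejects (M : Set ℕ) (s : Finset ℕ) : Prop :=
  ∀ N : Set ℕ, N ⊆ M → N.Infinite → ¬ Accepts Fam N s

def Decides (M : Set ℕ) (s : Finset ℕ) : Prop := Accepts Fam M s ∨ Rejects Fam M s

theorem accepts_mono {M N : Set ℕ} {s : Finset ℕ} (hNM : N ⊆ M) (h : Accepts Fam M s) :
    Accepts Fam N s := fun P hP hPinf hPs => h P (hP.trans hNM) hPinf hPs

theorem rejects_mono {M N : Set ℕ} {s : Finset ℕ} (hNM : N ⊆ M) (h : Rejects Fam M s) :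
    Rejects Fam N s := fun P hP hPinf => h P (hP.trans hNM) hPinf

theorem decides_mono {M N : Set ℕ} {s : Finset ℕ} (hNM : N ⊆ M) (h : Decides Fam M s) :
    Decides Fam N s :=
  h.imp (accepts_mono Fam hNM) (rejects_mono Fam hNM)

theorem exists_decides (M : Set ℕ) (hM : M.Infinite) (s : Finset ℕ) :
    ∃ N : Set ℕ, N ⊆ M ∧ N.Infinite ∧ Decides Fam N s := by
  by_cases h : ∃ N : Set ℕ, N ⊆ M ∧ N.Infinite ∧ Accepts Fam N s
  · obtain ⟨N, h1, h2, h3⟩ := h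
    exact ⟨N, h1, h2, Or.inl h3⟩
  · push_neg at h
    exact ⟨M, subset_rfl, hM, Or.inr fun N hN hNinf hNacc => h N hN hNinf hNacc⟩

theorem exists_decides_list (l : List (Finset ℕ)) :
    ∀ M : Set ℕ, M.Infinite → ∃ N : Set ℕ, N ⊆ M ∧ N.Infinite ∧ ∀ s ∈ l, Decides Fam N s := by
  induction l with
  | nil => exact fun M hM => ⟨M, subset_rfl, hM, by simp⟩
  | cons s l ih =>
    intro M hM
    obtain ⟨N, hNM, hNinf, hN⟩ := exists_decides Fam M hM s
    obtain ⟨P, hPN, hPinf, hP⟩ := ih N hNinf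
    refine ⟨P, hPN.trans hNM, hPinf, ?_⟩
    intro u hu
    rcases List.mem_cons.1 hu with rfl | hu
    · exact decides_mono Fam hPN hN
    · exact hP u hu

/-- one step of the fusion construction -/
theorem step_exists (M : Set ℕ) (hM : M.Infinite) :
    ∃ N : Set ℕ, N ⊆ M ∧ N.Infinite ∧ (∀ a ∈ N, sInf M < a) ∧
      ∀ s ∈ (Finset.range (sInf M + 1)).powerset, Decides Fam N s := by
  have hM' : (M ∩ Set.Ioi (sInf M)).Infinite := by
    have : M ∩ Set.Ioi (sInf M) = M \ Set.Iic (sInf M) := by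
      ext x; simp [Set.mem_diff, not_le]
    rw [this]
    exact hM.diff (Set.finite_Iic _)
  obtain ⟨N, hNM, hNinf, hN⟩ :=
    exists_decides_list Fam ((Finset.range (sInf M + 1)).powerset.toList) _ hM'
  refine ⟨N, hNM.trans (Set.inter_subset_left), hNinf,
    fun a ha => (hNM ha).2, fun s hs => hN s (Finset.mem_toList.2 hs)⟩

noncomputable def stepFn : {M : Set ℕ // M.Infinite} → {M : Set ℕ // M.Infinite} :=
  fun M => ⟨(step_exists Fam M.1 M.2).choose, ((step_exists Fam M.1 M.2).choose_spec).2.1⟩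

noncomputable def Mseq : ℕ → {M : Set ℕ // M.Infinite} :=
  fun k => (stepFn Fam)^[k] ⟨Set.univ, Set.infinite_univ⟩

theorem Mseq_succ (k : ℕ) : Mseq Fam (k + 1) = stepFn Fam (Mseq Fam k) := by
  simp [Mseq, Function.iterate_succ_apply']

noncomputable def mseq (k : ℕ) : ℕ := sInf (Mseq Fam k).1

theorem mseq_mem (k : ℕ) : mseq Fam k ∈ (Mseq Fam k).1 :=
  Nat.sInf_mem (Mseq Fam k).2.nonempty

theorem Mseq_succ_subset (k : ℕ) : (Mseq Fam (k + 1)).1 ⊆ (Mseq Fam k).1 := by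
  rw [Mseq_succ]
  exact (step_exists Fam (Mseq Fam k).1 (Mseq Fam k).2).choose_spec.1

theorem Mseq_succ_gt (k : ℕ) : ∀ a ∈ (Mseq Fam (k + 1)).1, mseq Fam k < a := by
  rw [Mseq_succ]
  exact (step_exists Fam (Mseq Fam k).1 (Mseq Fam k).2).choose_spec.2.2.1

theorem Mseq_succ_decides (k : ℕ) :
    ∀ s : Finset ℕ, s ⊆ Finset.range (mseq Fam k + 1) → Decides Fam (Mseq Fam (k + 1)).1 s := by
  rw [Mseq_succ]
  intro s hs
  exact (step_exists Fam (Mseq Fam k).1 (Mseq Fam k).2).choose_spec.2.2.2 s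
    (Finset.mem_powerset.2 hs)

theorem Mseq_subset {j k : ℕ} (h : j ≤ k) : (Mseq Fam k).1 ⊆ (Mseq Fam j).1 := by
  induction k with
  | zero => simp_all
  | succ k ih =>
    rcases Nat.lt_or_ge j (k+1) with h' | h'
    · exact (Mseq_succ_subset Fam k).trans (ih (Nat.lt_succ_iff.1 h'))
    · have : j = k + 1 := le_antisymm h h'
      subst this; exact subset_rfl

theorem mseq_strictMono : StrictMono (mseq Fam) := by
  apply strictMono_nat_of_lt_succ
  intro k
  exact Mseq_succ_gt Fam k _ (mseq_mem Fam (k+1))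

/-- the fusion set -/
noncomputable def mStar : Set ℕ := Set.range (mseq Fam)

theorem mStar_infinite : (mStar Fam).Infinite :=
  Set.infinite_range_of_injective (mseq_strictMono Fam).injective

theorem mStar_tail_subset (k : ℕ) : mStar Fam ∩ Set.Ioi (mseq Fam k) ⊆ (Mseq Fam (k + 1)).1 := by
  rintro x ⟨⟨j, rfl⟩, hx⟩
  have hjk : k < j := by
    by_contra h
    push_neg at h
    exact absurd ((mseq_strictMono Fam).le_iff_le.2 h) (not_le.2 hx)
  exact Mseq_subset Fam hjk (mseq_mem Fam j)

theorem mStar_decides {s : Finset ℕ} (hs : s.Nonempty) (hsub : ↑s ⊆ mStar Fam) :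
    Decides Fam (mStar Fam) s := by
  obtain ⟨k, hk⟩ : ∃ k, mseq Fam k = s.max' hs := hsub (s.max'_mem hs)
  have hrange : s ⊆ Finset.range (mseq Fam k + 1) := by
    intro a ha
    simp only [Finset.mem_range, Nat.lt_succ_iff]
    rw [hk]
    exact s.le_max' a ha
  have hgt : ∀ a ∈ s, a ≤ mseq Fam k := fun a ha => by
    rw [hk]; exact s.le_max' a ha
  rcases Mseq_succ_decides Fam k s hrange with hacc | hrej
  · left
    intro N hNM hNinf hNs
    have hN' : N ⊆ (Mseq Fam (k+1)).1 := by
      intro a ha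
      apply mStar_tail_subset Fam k
      refine ⟨hNM ha, ?_⟩
      have := hNs a ha _ (s.max'_mem hs)
      rw [← hk] at this
      exact this
    exact hacc N hN' hNinf hNs
  · right
    intro N hNM hNinf hNacc
    have h1 : (N ∩ Set.Ioi (mseq Fam k)).Infinite := by
      have : N ∩ Set.Ioi (mseq Fam k) = N \ Set.Iic (mseq Fam k) := by
        ext x; simp [Set.mem_diff, not_le]
      rw [this]
      exact hNinf.diff (Set.finite_Iic _)
    refine hrej (N ∩ Set.Ioi (mseq Fam k)) ?_ h1 (accepts_mono Fam Set.inter_subset_left hNacc)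
    intro a ha
    exact mStar_tail_subset Fam k ⟨hNM ha.1, ha.2⟩


/-- If `s` is already in the family, every infinite set accepts it. -/
theorem accepts_of_mem {s : Finset ℕ} (hs : Fam s) (M : Set ℕ) : Accepts Fam M s := by
  intro N _ _ _
  refine ⟨∅, ⟨0, by simp⟩, by simpa using hs⟩

theorem not_rejects_of_mem {s : Finset ℕ} (hs : Fam s) : ¬ Rejects Fam (mStar Fam) s := by
  intro h
  have h1 : (mStar Fam ∩ Set.Ioi (s.sup id)).Infinite := by
    have : mStar Fam ∩ Set.Ioi (s.sup id) = mStar Fam \ Set.Iic (s.sup id) := by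
      ext x; simp [Set.mem_diff, not_le]
    rw [this]
    exact (mStar_infinite Fam).diff (Set.finite_Iic _)
  exact h _ Set.inter_subset_left h1 (accepts_of_mem Fam hs _)

/-- The set of points that can be adjoined to a rejected set yielding an accepted set
is finite. -/
theorem badSet_finite {s : Finset ℕ} (hrej : Rejects Fam (mStar Fam) s) :
    {m : ℕ | m ∈ mStar Fam ∧ (∀ b ∈ s, b < m) ∧
      Accepts Fam (mStar Fam) (insert m s)}.Finite := by
  by_contra hinf
  rw [← Set.not_infinite, not_not] at hinf
  set N := {m : ℕ | m ∈ mStar Fam ∧ (∀ b ∈ s, b < m) ∧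
      Accepts Fam (mStar Fam) (insert m s)} with hN
  have hNsub : N ⊆ mStar Fam := fun m hm => hm.1
  apply hrej N hNsub hinf
  -- show N accepts s
  intro Q hQN hQinf hQs
  have hQne : Q.Nonempty := hQinf.nonempty
  set a := sInf Q with ha
  have haQ : a ∈ Q := Nat.sInf_mem hQne
  have haN : a ∈ N := hQN haQ
  have hQ' : (Q \ {a}).Infinite := hQinf.diff (Set.finite_singleton a)
  have hQ'sub : Q \ {a} ⊆ mStar Fam := fun x hx => hNsub (hQN hx.1)
  have hQ'gt : ∀ x ∈ Q \ {a}, ∀ b ∈ insert a s, b < x := by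
    rintro x ⟨hxQ, hxa⟩ b hb
    rcases Finset.mem_insert.1 hb with rfl | hb
    · exact lt_of_le_of_ne (Nat.sInf_le hxQ) (fun h => hxa (by simp [← h]))
    · exact hQs x hxQ b hb
  obtain ⟨t, ⟨c, hc⟩, hFam⟩ := haN.2.2 (Q \ {a}) hQ'sub hQ' hQ'gt
  refine ⟨insert a t, ⟨max c (a+1), ?_⟩, ?_⟩
  · intro x
    constructor
    · intro hx
      rcases Finset.mem_insert.1 hx with rfl | hx
      · exact ⟨haQ, lt_of_lt_of_le (Nat.lt_succ_self _) (le_max_right _ _)⟩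
      · obtain ⟨⟨hxQ, _⟩, hxc⟩ := (hc x).1 hx
        exact ⟨hxQ, lt_of_lt_of_le hxc (le_max_left _ _)⟩
    · rintro ⟨hxQ, hxc⟩
      rcases eq_or_ne x a with rfl | hxa
      · exact Finset.mem_insert_self _ _
      · have hxQ' : x ∈ Q \ {a} := ⟨hxQ, hxa⟩
        have hax : a < x := lt_of_le_of_ne (Nat.sInf_le hxQ) (Ne.symm hxa)
        have hxc' : x < c := by
          rcases max_cases c (a+1) with ⟨h1, _⟩ | ⟨h1, _⟩
          · rw [h1] at hxc; exact hxc
          · rw [h1] at hxc; omega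
        exact Finset.mem_insert_of_mem ((hc x).2 ⟨hxQ', hxc'⟩)
  · have : s ∪ insert a t = insert a s ∪ t := by
      ext x; simp only [Finset.mem_union, Finset.mem_insert]; tauto
    rw [this]
    exact hFam

/-- Sets all of whose subsets are rejected. -/
def AllRejected (s : Finset ℕ) : Prop :=
  ↑s ⊆ mStar Fam ∧ ∀ u ⊆ s, Rejects Fam (mStar Fam) u

theorem allRejected_extend
    {s : Finset ℕ} (hs : AllRejected Fam s) (bound : ℕ) :
    ∃ a ∈ mStar Fam, bound < a ∧ s.sup id < a ∧ AllRejected Fam (insert a s) := by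
  classical
  have hBad : (⋃ u ∈ s.powerset, {m : ℕ | m ∈ mStar Fam ∧ (∀ b ∈ u, b < m) ∧
      Accepts Fam (mStar Fam) (insert m u)}).Finite := by
    apply Set.Finite.biUnion (s.powerset.finite_toSet)
    intro u hu
    exact badSet_finite Fam (hs.2 u (Finset.mem_powerset.1 hu))
  have hinf : (mStar Fam \ (⋃ u ∈ s.powerset, {m : ℕ | m ∈ mStar Fam ∧ (∀ b ∈ u, b < m) ∧
      Accepts Fam (mStar Fam) (insert m u)})).Infinite := (mStar_infinite Fam).diff hBad
  obtain ⟨a, ⟨haM, haBad⟩, hagt⟩ := hinf.exists_gt (max bound (s.sup id))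
  refine ⟨a, haM, lt_of_le_of_lt (le_max_left _ _) hagt,
    lt_of_le_of_lt (le_max_right _ _) hagt, ?_, ?_⟩
  · rw [Finset.coe_insert]
    exact Set.insert_subset haM hs.1
  · intro u hu
    by_cases hau : a ∈ u
    · -- u = insert a u' with u' ⊆ s
      have hu' : u.erase a ⊆ s := by
        intro x hx
        have := hu (Finset.mem_of_mem_erase hx)
        rcases Finset.mem_insert.1 this with rfl | h
        · exact absurd rfl (Finset.ne_of_mem_erase hx)
        · exact h
      have hue : u = insert a (u.erase a) := (Finset.insert_erase hau).symm
      have hrej' : Rejects Fam (mStar Fam) (u.erase a) := hs.2 _ hu'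
      have hune : u.Nonempty := ⟨a, hau⟩
      have husub : ↑u ⊆ mStar Fam := by
        intro x hx
        have := hu hx
        rcases Finset.mem_insert.1 this with rfl | h
        · exact haM
        · exact hs.1 h
      rcases mStar_decides Fam hune husub with hacc | hrej
      · exfalso
        apply haBad
        simp only [Set.mem_iUnion]
        refine ⟨u.erase a, Finset.mem_powerset.2 hu', haM, ?_, by rwa [hue] at hacc⟩
        intro b hb
        have hbs : b ∈ s := hu' hb
        calc b ≤ s.sup id := Finset.le_sup (f := id) hbs
        _ < a := lt_of_le_of_lt (le_max_right _ _) hagt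
      · exact hrej
    · -- u ⊆ s
      have : u ⊆ s := by
        intro x hx
        rcases Finset.mem_insert.1 (hu hx) with rfl | h
        · exact absurd hx hau
        · exact h
      exact hs.2 u this


noncomputable def Gchain (h0 : AllRejected Fam ∅) : ℕ → {s : Finset ℕ // AllRejected Fam s}
  | 0 => ⟨∅, h0⟩
  | k+1 =>
    let p := Gchain h0 k
    ⟨insert (allRejected_extend Fam p.2 0).choose p.1,
      (allRejected_extend Fam p.2 0).choose_spec.2.2.2⟩

theorem Gchain_subset_succ (h0 : AllRejected Fam ∅) (k : ℕ) :
    (Gchain Fam h0 k).1 ⊆ (Gchain Fam h0 (k+1)).1 := by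
  intro x hx
  exact Finset.mem_insert_of_mem hx

theorem Gchain_subset (h0 : AllRejected Fam ∅) {j k : ℕ} (h : j ≤ k) :
    (Gchain Fam h0 j).1 ⊆ (Gchain Fam h0 k).1 := by
  induction k with
  | zero => simp_all
  | succ k ih =>
    rcases Nat.lt_or_ge j (k+1) with h' | h'
    · exact (ih (Nat.lt_succ_iff.1 h')).trans (Gchain_subset_succ Fam h0 k)
    · have : j = k + 1 := le_antisymm h h'
      subst this; exact subset_rfl

theorem Gchain_sup_lt (h0 : AllRejected Fam ∅) (k : ℕ) :
    (Gchain Fam h0 k).1.sup id < (Gchain Fam h0 (k+1)).1.sup id := by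
  have h := (allRejected_extend Fam (Gchain Fam h0 k).2 0).choose_spec
  calc (Gchain Fam h0 k).1.sup id < (allRejected_extend Fam (Gchain Fam h0 k).2 0).choose :=
        h.2.2.1
    _ ≤ (Gchain Fam h0 (k+1)).1.sup id := by
        apply Finset.le_sup (f := id) (b := (allRejected_extend Fam (Gchain Fam h0 k).2 0).choose)
        exact Finset.mem_insert_self _ _

/-- The union of the chain. -/
noncomputable def Mss (h0 : AllRejected Fam ∅) : Set ℕ := ⋃ k, ↑(Gchain Fam h0 k).1

theorem Mss_infinite (h0 : AllRejected Fam ∅) : (Mss Fam h0).Infinite := by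
  apply Set.infinite_of_not_bddAbove
  rintro ⟨c, hc⟩
  have hsup : ∀ k, (Gchain Fam h0 k).1.sup id ≤ c ∨ (Gchain Fam h0 k).1 = ∅ := by
    intro k
    by_cases h : (Gchain Fam h0 k).1 = ∅
    · exact Or.inr h
    · left
      obtain ⟨a, ha, hmax⟩ := Finset.exists_mem_eq_sup (Gchain Fam h0 k).1
        (Finset.nonempty_of_ne_empty h) id
      rw [hmax]
      exact hc (Set.mem_iUnion.2 ⟨k, ha⟩)
  have hmono : ∀ k, k ≤ (Gchain Fam h0 (k+1)).1.sup id := by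
    intro k
    induction k with
    | zero => exact Nat.zero_le _
    | succ k ih => exact Nat.lt_of_le_of_lt ih (Gchain_sup_lt Fam h0 (k+1))
  have hne : ∀ k, (Gchain Fam h0 (k+1)).1 ≠ ∅ := by
    intro k
    apply Finset.ne_empty_of_mem (a := (allRejected_extend Fam (Gchain Fam h0 k).2 0).choose)
    exact Finset.mem_insert_self _ _
  have h3 : c + 1 + 1 = c + 2 := by omega
  rcases hsup (c+2) with h | h
  · have h2 := hmono (c+1)
    rw [h3] at h2
    omega
  · have h2 := hne (c+1)
    rw [h3] at h2
    exact h2 h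

theorem exists_chain_subset (h0 : AllRejected Fam ∅) :
    ∀ t : Finset ℕ, ↑t ⊆ Mss Fam h0 → ∃ k, t ⊆ (Gchain Fam h0 k).1 := by
  classical
  intro t
  induction t using Finset.induction_on with
  | empty => exact fun _ => ⟨0, Finset.empty_subset _⟩
  | @insert x t hx ih =>
    intro ht
    obtain ⟨k₁, hk₁⟩ := ih (fun y hy => ht (by simp [hy]))
    have hxM : x ∈ Mss Fam h0 := ht (by simp)
    obtain ⟨k₂, hk₂⟩ := Set.mem_iUnion.1 hxM
    refine ⟨max k₁ k₂, Finset.insert_subset ?_ ?_⟩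
    · exact Gchain_subset Fam h0 (le_max_right _ _) hk₂
    · exact hk₁.trans (Gchain_subset Fam h0 (le_max_left _ _))

theorem Mss_rejected (h0 : AllRejected Fam ∅) {t : Finset ℕ} (ht : ↑t ⊆ Mss Fam h0) :
    ¬ Fam t := by
  intro hFam
  obtain ⟨k, hk⟩ := exists_chain_subset Fam h0 t ht
  exact not_rejects_of_mem Fam hFam ((Gchain Fam h0 k).2.2 t hk)

theorem Mss_subset_mStar (h0 : AllRejected Fam ∅) : Mss Fam h0 ⊆ mStar Fam := by
  intro x hx
  obtain ⟨k, hk⟩ := Set.mem_iUnion.1 hx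
  exact (Gchain Fam h0 k).2.1 hk

/-- Nash–Williams style dichotomy. -/
theorem nashWilliams :
    ∃ M : Set ℕ, M.Infinite ∧
      ((∀ N : Set ℕ, N ⊆ M → N.Infinite → ∃ t : Finset ℕ, IsSeg t N ∧ Fam t) ∨
       (∀ t : Finset ℕ, ↑t ⊆ M → ¬ Fam t)) := by
  rcases Mseq_succ_decides Fam 0 ∅ (Finset.empty_subset _) with hacc | hrej
  · -- accept case
    refine ⟨mStar Fam ∩ Set.Ioi (mseq Fam 0), ?_, Or.inl ?_⟩
    · have : mStar Fam ∩ Set.Ioi (mseq Fam 0) = mStar Fam \ Set.Iic (mseq Fam 0) := by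
        ext x; simp [Set.mem_diff, not_le]
      rw [this]
      exact (mStar_infinite Fam).diff (Set.finite_Iic _)
    · intro N hN hNinf
      have : Accepts Fam N ∅ :=
        accepts_mono Fam (hN.trans (mStar_tail_subset Fam 0)) hacc
      obtain ⟨t, hseg, hFam⟩ := this N subset_rfl hNinf (by simp)
      exact ⟨t, hseg, by simpa using hFam⟩
  · -- reject case
    have hrej' : Rejects Fam (mStar Fam) ∅ := by
      intro N hNM hNinf hNacc
      have h1 : (N ∩ Set.Ioi (mseq Fam 0)).Infinite := by
        have : N ∩ Set.Ioi (mseq Fam 0) = N \ Set.Iic (mseq Fam 0) := by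
          ext x; simp [Set.mem_diff, not_le]
        rw [this]
        exact hNinf.diff (Set.finite_Iic _)
      refine hrej (N ∩ Set.Ioi (mseq Fam 0)) ?_ h1
        (accepts_mono Fam Set.inter_subset_left hNacc)
      intro a ha
      exact mStar_tail_subset Fam 0 ⟨hNM ha.1, ha.2⟩
    have h0 : AllRejected Fam ∅ := by
      refine ⟨by simp, fun u hu => ?_⟩
      rw [Finset.subset_empty.1 hu]
      exact hrej'
    exact ⟨Mss Fam h0, Mss_infinite Fam h0, Or.inr (fun t ht => Mss_rejected Fam h0 ht)⟩


section Alternating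

variable {S : Type*} (A B : ℕ → Set S)

/-- Alternating intersection along a list; `b = true` means the next set is an `A`. -/
def altInterB : List ℕ → Bool → Set S
  | [], _ => Set.univ
  | n :: l, b => (if b then A n else B n) ∩ altInterB l (!b)

/-- The list realizing a given pattern `w` inside an alternating chain. -/
def chain (e : ℕ → ℕ) (w : ℕ → Bool) : List ℕ → Bool → List ℕ
  | [], _ => []
  | k :: ks, p => if p = w k then e (2*k+1) :: chain e w ks (!p)
                  else e (2*k) :: e (2*k+1) :: chain e w ks p

theorem chain_mem (e : ℕ → ℕ) (w : ℕ → Bool) :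
    ∀ (ks : List ℕ) (p : Bool) (x : ℕ), x ∈ chain e w ks p →
      ∃ j ∈ ks, x = e (2*j) ∨ x = e (2*j+1) := by
  intro ks
  induction ks with
  | nil => intro p x hx; simp [chain] at hx
  | cons k ks ih =>
    intro p x hx
    rw [chain] at hx
    split at hx
    · rcases List.mem_cons.1 hx with rfl | hx
      · exact ⟨k, List.mem_cons_self .., Or.inr rfl⟩
      · obtain ⟨j, hj, hx⟩ := ih _ x hx
        exact ⟨j, List.mem_cons_of_mem _ hj, hx⟩
    · rcases List.mem_cons.1 hx with rfl | hx
      · exact ⟨k, List.mem_cons_self .., Or.inl rfl⟩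
      · rcases List.mem_cons.1 hx with rfl | hx
        · exact ⟨k, List.mem_cons_self .., Or.inr rfl⟩
        · obtain ⟨j, hj, hx⟩ := ih _ x hx
          exact ⟨j, List.mem_cons_of_mem _ hj, hx⟩

theorem chain_sorted {e : ℕ → ℕ} (he : StrictMono e) (w : ℕ → Bool) :
    ∀ (ks : List ℕ), ks.Pairwise (· < ·) → ∀ p : Bool,
      (chain e w ks p).Pairwise (· < ·) := by
  intro ks
  induction ks with
  | nil => intro _ p; simp [chain]
  | cons k ks ih =>
    intro hs p
    rw [List.pairwise_cons] at hs
    have hgt : ∀ (q : Bool) (x : ℕ), x ∈ chain e w ks q → e (2*k+1) < x := by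
      intro q x hx
      obtain ⟨j, hj, hx⟩ := chain_mem e w ks q x hx
      have hkj : k < j := hs.1 j hj
      rcases hx with rfl | rfl
      · exact he (by omega)
      · exact he (by omega)
    rw [chain]
    split
    · rw [List.pairwise_cons]
      exact ⟨fun x hx => hgt _ x hx, ih hs.2 _⟩
    · rw [List.pairwise_cons]
      constructor
      · intro x hx
        rcases List.mem_cons.1 hx with rfl | hx
        · exact he (by omega)
        · exact (he (by omega : 2*k < 2*k+1)).trans (hgt _ x hx)
      · rw [List.pairwise_cons]
        exact ⟨fun x hx => hgt _ x hx, ih hs.2 _⟩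

theorem chain_spec (e : ℕ → ℕ) (w : ℕ → Bool) (s : S) :
    ∀ (ks : List ℕ) (p : Bool), s ∈ altInterB A B (chain e w ks p) p →
      ∀ k ∈ ks, s ∈ (if w k then A (e (2*k+1)) else B (e (2*k+1))) := by
  intro ks
  induction ks with
  | nil => intro p _ k hk; simp at hk
  | cons k ks ih =>
    intro p hp k' hk'
    rw [chain] at hp
    split at hp
    · rename_i hpw
      rw [altInterB] at hp
      rcases List.mem_cons.1 hk' with rfl | hk'
      · rw [← hpw]
        exact hp.1
      · exact ih _ hp.2 k' hk'
    · rename_i hpw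
      rw [altInterB, altInterB] at hp
      rcases List.mem_cons.1 hk' with rfl | hk'
      · have h1 := hp.2.1
        cases hpv : p <;> cases hw : w k' <;> simp_all
      · have := hp.2.2
        rw [Bool.not_not] at this
        exact ih _ this k' hk'

theorem mem_altInterB_of_range' (g : ℕ → ℕ) (s : S)
    (hmem : ∀ j, (Even j → s ∈ A (g j)) ∧ (¬ Even j → s ∈ B (g j))) :
    ∀ (p j : ℕ) (b : Bool), (b = true ↔ Even j) →
      s ∈ altInterB A B ((List.range' j p).map g) b := by
  intro p
  induction p with
  | zero => intro j b _; simp [altInterB]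
  | succ p ih =>
    intro j b hb
    rw [List.range'_succ, List.map_cons, altInterB]
    refine ⟨?_, ?_⟩
    · cases b
      · have hodd : ¬ Even j := fun h => absurd (hb.2 h) (by simp)
        simpa using (hmem j).2 hodd
      · simpa using (hmem j).1 (hb.1 rfl)
    · cases b
      · have hodd : ¬ Even j := fun h => absurd (hb.2 h) (by simp)
        exact ih (j+1) _ (by simp [Nat.even_add_one, hodd])
      · have heven : Even j := hb.1 rfl
        exact ih (j+1) _ (by simp [Nat.even_add_one, heven])

theorem sort_of_sorted_lt {l : List ℕ} (h : l.Pairwise (· < ·)) :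
    l.toFinset.sort (· ≤ ·) = l :=
  (List.toFinset_sort (· ≤ ·) h.nodup).2 (h.imp le_of_lt)

end Alternating

section LemmaL

variable {S : Type*}

/-- The key combinatorial dichotomy: any pair of sequences of sets has a subsequence that
either "converges" or is independent. -/
theorem lemmaL (A B : ℕ → Set S) :
    ∃ ψ : ℕ → ℕ, StrictMono ψ ∧
      ((∀ s : S, {n | s ∈ A (ψ n)}.Finite ∨ {n | s ∈ B (ψ n)}.Finite) ∨
       (∀ F G : Finset ℕ, Disjoint F G →
          ∃ s : S, (∀ k ∈ F, s ∈ A (ψ k)) ∧ (∀ k ∈ G, s ∈ B (ψ k)))) := by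
  classical
  set Fam : Finset ℕ → Prop := fun t => altInterB A B (t.sort (· ≤ ·)) true = ∅ with hFamDef
  obtain ⟨M, hMinf, hM⟩ := nashWilliams Fam
  have hMinf' : {n | n ∈ M}.Infinite := hMinf
  set e : ℕ → ℕ := Nat.nth (· ∈ M) with he
  have heSM : StrictMono e := Nat.nth_strictMono hMinf'
  have heM : ∀ n, e n ∈ M := fun n => Nat.nth_mem_of_infinite hMinf' n
  rcases hM with hA | hB
  · -- convergent case
    refine ⟨e, heSM, Or.inl ?_⟩
    intro s
    by_contra hcon
    push_neg at hcon
    obtain ⟨hIA, hIB⟩ := hcon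
    have key : ∀ (j b : ℕ), ∃ m, b < m ∧ (Even j → s ∈ A (e m)) ∧ (¬ Even j → s ∈ B (e m)) := by
      intro j b
      by_cases hj : Even j
      · obtain ⟨m, hm, hbm⟩ := hIA.exists_gt b
        exact ⟨m, hbm, fun _ => hm, fun h => absurd hj h⟩
      · obtain ⟨m, hm, hbm⟩ := hIB.exists_gt b
        exact ⟨m, hbm, fun h => absurd h hj, fun _ => hm⟩
    choose F hF1 hF2 hF3 using key
    set idx : ℕ → ℕ := fun j => Nat.rec (F 0 0) (fun j' ih => F (j'+1) ih) j with hidx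
    have hidxsucc : ∀ j, idx (j+1) = F (j+1) (idx j) := fun j => rfl
    have hidxmono : StrictMono idx := by
      apply strictMono_nat_of_lt_succ
      intro j
      rw [hidxsucc]
      exact hF1 (j+1) (idx j)
    have hidxmem : ∀ j, (Even j → s ∈ A (e (idx j))) ∧ (¬ Even j → s ∈ B (e (idx j))) := by
      intro j
      cases j with
      | zero => exact ⟨hF2 0 0, hF3 0 0⟩
      | succ j => exact ⟨hF2 (j+1) (idx j), hF3 (j+1) (idx j)⟩
    set g : ℕ → ℕ := fun j => e (idx j) with hg
    have hgmono : StrictMono g := heSM.comp hidxmono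
    have hgmem : ∀ j, g j ∈ M := fun j => heM (idx j)
    obtain ⟨t, ⟨c, hc⟩, hFam⟩ := hA (Set.range g) (by rintro x ⟨j, rfl⟩; exact hgmem j)
      (Set.infinite_range_of_injective hgmono.injective)
    have hex : ∃ j, c ≤ g j := ⟨c, hgmono.le_apply⟩
    have hiff : ∀ j, g j < c ↔ j < Nat.find hex := by
      intro j
      constructor
      · intro h
        by_contra hjp
        push_neg at hjp
        exact absurd (le_trans (Nat.find_spec hex) (hgmono.monotone hjp)) (not_le.2 h)
      · intro h
        exact not_le.1 (Nat.find_min hex h)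
    have ht : t = ((List.range (Nat.find hex)).map g).toFinset := by
      ext a
      rw [hc a, List.mem_toFinset, List.mem_map]
      constructor
      · rintro ⟨⟨j, rfl⟩, hac⟩
        exact ⟨j, List.mem_range.2 ((hiff j).1 hac), rfl⟩
      · rintro ⟨j, hj, rfl⟩
        exact ⟨⟨j, rfl⟩, (hiff j).2 (List.mem_range.1 hj)⟩
    have hsorted : ((List.range (Nat.find hex)).map g).Pairwise (· < ·) := by
      apply List.Pairwise.map (R := (· < ·)) _ (fun a b h => hgmono h)
      exact List.pairwise_lt_range
    have hsort : t.sort (· ≤ ·) = (List.range (Nat.find hex)).map g := by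
      rw [ht]; exact sort_of_sorted_lt hsorted
    have hsmem : s ∈ altInterB A B ((List.range (Nat.find hex)).map g) true := by
      rw [List.range_eq_range']
      exact mem_altInterB_of_range' A B g s hidxmem _ 0 true (by simp)
    simp only [hFamDef] at hFam
    rw [hsort] at hFam
    rw [hFam] at hsmem
    exact absurd hsmem (Set.notMem_empty s)
  · -- independent case
    refine ⟨fun k => e (2*k+1), ?_, Or.inr ?_⟩
    · intro a b hab
      exact heSM (by omega)
    · intro F G hFG
      classical
      set w : ℕ → Bool := fun k => decide (k ∈ F) with hw
      set ks : List ℕ := (F ∪ G).sort (· ≤ ·) with hks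
      have hkss : ks.Pairwise (· < ·) := List.sortedLT_iff_pairwise.1 (Finset.sortedLT_sort _)
      have hlsort : (chain e w ks true).Pairwise (· < ·) := chain_sorted heSM w ks hkss true
      have hlsub : ↑(chain e w ks true).toFinset ⊆ M := by
        intro x hx
        simp only [Finset.mem_coe, List.mem_toFinset] at hx
        obtain ⟨j, _, hx⟩ := chain_mem e w ks true x hx
        rcases hx with rfl | rfl <;> exact heM _
      have hnF := hB (chain e w ks true).toFinset hlsub
      simp only [hFamDef] at hnF
      rw [sort_of_sorted_lt hlsort] at hnF
      obtain ⟨s, hs⟩ := Set.nonempty_iff_ne_empty.2 hnF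
      have hspec := chain_spec A B e w s ks true hs
      refine ⟨s, ?_, ?_⟩
      · intro k hk
        have := hspec k (by rw [hks]; exact (Finset.mem_sort _).2 (Finset.mem_union_left _ hk))
        rw [hw] at this
        simpa [hk] using this
      · intro k hk
        have hkF : k ∉ F := fun h => (Finset.disjoint_left.1 hFG h) hk
        have := hspec k (by rw [hks]; exact (Finset.mem_sort _).2 (Finset.mem_union_right _ hk))
        rw [hw] at this
        simpa [hkF] using this

end LemmaL


section Estimate

variable {S : Type*}

theorem l1_estimate [Nonempty S] (f : ℕ → S → ℝ) (C₀ : ℝ) (hb : ∀ n s, |f n s| ≤ C₀)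
    (φ : ℕ → ℕ) (r R : ℝ) (hrR : r < R)
    (hind : ∀ F G : Finset ℕ, Disjoint F G →
      ∃ s, (∀ k ∈ F, f (φ k) s < r) ∧ (∀ k ∈ G, R < f (φ k) s)) :
    ∃ c C : ℝ, 0 < c ∧ c ≤ C ∧ ∀ (a : ℕ → ℝ) (N : ℕ),
      (c * ∑ k ∈ Finset.range N, |a k| ≤
          ⨆ s : S, |∑ k ∈ Finset.range N, a k * f (φ k) s|) ∧
        ((⨆ s : S, |∑ k ∈ Finset.range N, a k * f (φ k) s|) ≤
          C * ∑ k ∈ Finset.range N, |a k|) := by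
  classical
  set c : ℝ := (R - r) / 2 with hc
  set C : ℝ := max C₀ c with hC
  have hc0 : 0 < c := by rw [hc]; linarith
  refine ⟨c, C, hc0, le_max_right _ _, ?_⟩
  intro a N
  have habs : ∀ s : S, |∑ k ∈ Finset.range N, a k * f (φ k) s| ≤
      C * ∑ k ∈ Finset.range N, |a k| := by
    intro s
    calc |∑ k ∈ Finset.range N, a k * f (φ k) s|
        ≤ ∑ k ∈ Finset.range N, |a k * f (φ k) s| := Finset.abs_sum_le_sum_abs _ _
      _ ≤ ∑ k ∈ Finset.range N, |a k| * C₀ := by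
          apply Finset.sum_le_sum
          intro k _
          rw [abs_mul]
          exact mul_le_mul_of_nonneg_left (hb _ s) (abs_nonneg _)
      _ = C₀ * ∑ k ∈ Finset.range N, |a k| := by rw [← Finset.sum_mul, mul_comm]
      _ ≤ C * ∑ k ∈ Finset.range N, |a k| := by
          apply mul_le_mul_of_nonneg_right (le_max_left _ _)
          exact Finset.sum_nonneg fun k _ => abs_nonneg _
  have hbdd : BddAbove (Set.range fun s : S => |∑ k ∈ Finset.range N, a k * f (φ k) s|) := by
    refine ⟨C * ∑ k ∈ Finset.range N, |a k|, ?_⟩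
    rintro x ⟨s, rfl⟩
    exact habs s
  refine ⟨?_, ciSup_le habs⟩
  -- lower bound
  set F₁ : Finset ℕ := (Finset.range N).filter (fun k => a k < 0) with hF₁
  set F₂ : Finset ℕ := (Finset.range N).filter (fun k => ¬ a k < 0) with hF₂
  have hdisj : Disjoint F₁ F₂ := Finset.disjoint_filter_filter_not _ _ _
  obtain ⟨s₁, hs₁A, hs₁B⟩ := hind F₁ F₂ hdisj
  obtain ⟨s₂, hs₂A, hs₂B⟩ := hind F₂ F₁ hdisj.symm
  have hkey : (R - r) * ∑ k ∈ Finset.range N, |a k| ≤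
      (∑ k ∈ Finset.range N, a k * f (φ k) s₁) - ∑ k ∈ Finset.range N, a k * f (φ k) s₂ := by
    rw [← Finset.sum_sub_distrib, Finset.mul_sum]
    apply Finset.sum_le_sum
    intro k hk
    by_cases hak : a k < 0
    · have h1 : f (φ k) s₁ < r := hs₁A k (Finset.mem_filter.2 ⟨hk, hak⟩)
      have h2 : R < f (φ k) s₂ := hs₂B k (Finset.mem_filter.2 ⟨hk, hak⟩)
      rw [abs_of_neg hak]
      nlinarith
    · have h1 : R < f (φ k) s₁ := hs₁B k (Finset.mem_filter.2 ⟨hk, hak⟩)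
      have h2 : f (φ k) s₂ < r := hs₂A k (Finset.mem_filter.2 ⟨hk, hak⟩)
      push_neg at hak
      rw [abs_of_nonneg hak]
      nlinarith
  have hle1 : |∑ k ∈ Finset.range N, a k * f (φ k) s₁| ≤
      ⨆ s : S, |∑ k ∈ Finset.range N, a k * f (φ k) s| := le_ciSup hbdd s₁
  have hle2 : |∑ k ∈ Finset.range N, a k * f (φ k) s₂| ≤
      ⨆ s : S, |∑ k ∈ Finset.range N, a k * f (φ k) s| := le_ciSup hbdd s₂
  have habs1 : (∑ k ∈ Finset.range N, a k * f (φ k) s₁) ≤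
      |∑ k ∈ Finset.range N, a k * f (φ k) s₁| := le_abs_self _
  have habs2 : -(∑ k ∈ Finset.range N, a k * f (φ k) s₂) ≤
      |∑ k ∈ Finset.range N, a k * f (φ k) s₂| := neg_le_abs _
  rw [hc]
  linarith

end Estimate


section Diagonal

open Filter

variable {S : Type*} (f : ℕ → S → ℝ) (q : ℕ → ℚ × ℚ)

noncomputable def Phi : ℕ → {g : ℕ → ℕ // StrictMono g}
  | 0 => ⟨id, strictMono_id⟩
  | i+1 =>
    let p := Phi i
    let h := lemmaL (fun n => {s : S | f (p.1 n) s < ((q i).1 : ℝ)})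
        (fun n => {s : S | ((q i).2 : ℝ) < f (p.1 n) s})
    ⟨p.1 ∘ h.choose, p.2.comp h.choose_spec.1⟩

noncomputable def theta (i : ℕ) : ℕ → ℕ :=
  (lemmaL (fun n => {s : S | f ((Phi f q i).1 n) s < ((q i).1 : ℝ)})
      (fun n => {s : S | ((q i).2 : ℝ) < f ((Phi f q i).1 n) s})).choose

theorem theta_strictMono (i : ℕ) : StrictMono (theta f q i) :=
  (lemmaL (fun n => {s : S | f ((Phi f q i).1 n) s < ((q i).1 : ℝ)})
      (fun n => {s : S | ((q i).2 : ℝ) < f ((Phi f q i).1 n) s})).choose_spec.1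

theorem Phi_succ (i : ℕ) : (Phi f q (i+1)).1 = (Phi f q i).1 ∘ theta f q i := rfl

theorem Phi_prop (i : ℕ) :
    (∀ s : S, {n | f ((Phi f q (i+1)).1 n) s < ((q i).1 : ℝ)}.Finite ∨
              {n | ((q i).2 : ℝ) < f ((Phi f q (i+1)).1 n) s}.Finite) ∨
    (∃ ψ : ℕ → ℕ, StrictMono ψ ∧ ∀ F G : Finset ℕ, Disjoint F G →
       ∃ s : S, (∀ k ∈ F, f (ψ k) s < ((q i).1 : ℝ)) ∧
                (∀ k ∈ G, ((q i).2 : ℝ) < f (ψ k) s)) := by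
  have h := (lemmaL (fun n => {s : S | f ((Phi f q i).1 n) s < ((q i).1 : ℝ)})
      (fun n => {s : S | ((q i).2 : ℝ) < f ((Phi f q i).1 n) s})).choose_spec.2
  rcases h with h | h
  · left
    intro s
    rcases h s with h' | h'
    · left
      convert h' using 2
      exact rfl
    · right
      convert h' using 2
      exact rfl
  · right
    refine ⟨(Phi f q (i+1)).1, (Phi f q (i+1)).2, ?_⟩
    intro F G hFG
    obtain ⟨s, hs1, hs2⟩ := h F G hFG
    exact ⟨s, fun k hk => hs1 k hk, fun k hk => hs2 k hk⟩

theorem Phi_comp {i n : ℕ} (h : i ≤ n) :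
    ∃ c : ℕ → ℕ, StrictMono c ∧ (Phi f q (n+1)).1 = (Phi f q (i+1)).1 ∘ c := by
  induction n, h using Nat.le_induction with
  | base => exact ⟨id, strictMono_id, rfl⟩
  | succ n hn ih =>
    obtain ⟨c, hc1, hc2⟩ := ih
    refine ⟨c ∘ theta f q (n+1), hc1.comp (theta_strictMono f q (n+1)), ?_⟩
    rw [Phi_succ f q (n+1), hc2]
    rfl

end Diagonal

end RosenthalAux

open RosenthalAux

/-- Rosenthal's dichotomy: a uniformly bounded sequence of real functions on an infinite set
has a subsequence that either converges pointwise or is equivalent, in the sup norm,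
to the standard basis of `ℓ¹`. -/
theorem rosenthal_dichotomy {S : Type*} [Infinite S] (f : ℕ → S → ℝ) (C₀ : ℝ)
    (hb : ∀ n s, |f n s| ≤ C₀) :
    ∃ φ : ℕ → ℕ, StrictMono φ ∧
      ((∀ s : S, ∃ l : ℝ, Tendsto (fun n => f (φ n) s) atTop (nhds l)) ∨
        (∃ c C : ℝ, 0 < c ∧ c ≤ C ∧ ∀ (a : ℕ → ℝ) (N : ℕ),
          (c * ∑ k ∈ Finset.range N, |a k| ≤
              ⨆ s : S, |∑ k ∈ Finset.range N, a k * f (φ k) s|) ∧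
            ((⨆ s : S, |∑ k ∈ Finset.range N, a k * f (φ k) s|) ≤
              C * ∑ k ∈ Finset.range N, |a k|))) := by
  classical
  have hS : Nonempty S := inferInstance
  by_cases H : ∃ ψ : ℕ → ℕ, StrictMono ψ ∧ ∃ r R : ℚ, (r : ℝ) < (R : ℝ) ∧
      ∀ F G : Finset ℕ, Disjoint F G →
        ∃ s : S, (∀ k ∈ F, f (ψ k) s < (r : ℝ)) ∧ (∀ k ∈ G, (R : ℝ) < f (ψ k) s)
  · obtain ⟨ψ, hψ, r, R, hrR, hind⟩ := H
    exact ⟨ψ, hψ, Or.inr (l1_estimate f C₀ hb ψ r R hrR hind)⟩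
  · obtain ⟨q, hq⟩ := exists_surjective_nat (ℚ × ℚ)
    set d : ℕ → ℕ := fun n => (Phi f q (n+1)).1 n with hd
    have hdmono : StrictMono d := by
      apply strictMono_nat_of_lt_succ
      intro n
      have h1 : d (n+1) = (Phi f q (n+1)).1 (theta f q (n+1) (n+1)) := by
        rw [hd]
        simp only
        rw [Phi_succ f q (n+1)]
        rfl
      rw [h1, hd]
      simp only
      apply (Phi f q (n+1)).2
      calc n < n + 1 := Nat.lt_succ_self n
        _ ≤ theta f q (n+1) (n+1) := (theta_strictMono f q (n+1)).le_apply
    refine ⟨d, hdmono, Or.inl ?_⟩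
    intro s
    set u : ℕ → ℝ := fun n => f (d n) s with hu
    have hbdd1 : IsBoundedUnder (· ≤ ·) atTop u :=
      isBoundedUnder_of ⟨C₀, fun n => (abs_le.1 (hb _ s)).2⟩
    have hbdd2 : IsBoundedUnder (· ≥ ·) atTop u :=
      isBoundedUnder_of ⟨-C₀, fun n => (abs_le.1 (hb _ s)).1⟩
    have hle : liminf u atTop ≤ limsup u atTop := liminf_le_limsup hbdd1 hbdd2
    rcases eq_or_lt_of_le hle with heq | hlt
    · exact ⟨limsup u atTop, tendsto_of_liminf_eq_limsup heq rfl hbdd1 hbdd2⟩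
    · exfalso
      obtain ⟨r, hr1, hr2⟩ := exists_rat_btwn hlt
      obtain ⟨R, hR1, hR2⟩ := exists_rat_btwn hr2
      obtain ⟨i, hi⟩ := hq (r, R)
      have hq1 : ((q i).1 : ℝ) = (r : ℝ) := by rw [hi]
      have hq2 : ((q i).2 : ℝ) = (R : ℝ) := by rw [hi]
      rcases Phi_prop f q i with hconv | hindep
      · -- transfer convergence property to the diagonal
        have hcomp : ∀ n, i ≤ n → ∃ m, d n = (Phi f q (i+1)).1 m := by
          intro n hn
          obtain ⟨c, _, hc2⟩ := Phi_comp f q (i := i) (n := n) hn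
          exact ⟨c n, by rw [hd]; simp only; rw [hc2]; rfl⟩
        have htrans : ∀ (P : ℝ → Prop), {m | P (f ((Phi f q (i+1)).1 m) s)}.Finite →
            {n | P (u n)}.Finite := by
          intro P hfin
          have hsplit : {n | P (u n)} ⊆ {n | n < i} ∪ {n | i ≤ n ∧ P (u n)} := by
            intro n hn
            rcases Nat.lt_or_ge n i with h | h
            · exact Or.inl h
            · exact Or.inr ⟨h, hn⟩
          apply Set.Finite.subset _ hsplit
          apply Set.Finite.union (Set.finite_Iio i)
          apply Set.Finite.of_finite_image
            (f := fun n => Function.invFun (Phi f q (i+1)).1 (d n))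
          · apply hfin.subset
            rintro x ⟨n, ⟨hni, hPn⟩, rfl⟩
            have hinv : (Phi f q (i+1)).1 (Function.invFun (Phi f q (i+1)).1 (d n)) = d n := by
              apply Function.invFun_eq
              obtain ⟨m, hm⟩ := hcomp n hni
              exact ⟨m, hm.symm⟩
            simp only [Set.mem_setOf_eq, hinv]
            exact hPn
          · intro n hn n' hn' hEq
            have h1 : (Phi f q (i+1)).1 (Function.invFun (Phi f q (i+1)).1 (d n)) = d n := by
              apply Function.invFun_eq
              obtain ⟨m, hm⟩ := hcomp n hn.1
              exact ⟨m, hm.symm⟩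
            have h2 : (Phi f q (i+1)).1 (Function.invFun (Phi f q (i+1)).1 (d n')) = d n' := by
              apply Function.invFun_eq
              obtain ⟨m, hm⟩ := hcomp n' hn'.1
              exact ⟨m, hm.symm⟩
            simp only at hEq
            have : d n = d n' := by rw [← h1, ← h2, hEq]
            exact hdmono.injective this
        have hev : ∀ (T : Set ℕ), T.Finite → ∀ᶠ n in atTop, n ∉ T := by
          intro T hT
          obtain ⟨b, hbnd⟩ := hT.bddAbove
          rw [eventually_atTop]
          exact ⟨b+1, fun n hn hmem => by have := hbnd hmem; omega⟩
        rcases hconv s with hfin | hfin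
        · -- liminf ≥ r, contradiction with hr1
          rw [hq1] at hfin
          have hfin' : {n | u n < (r : ℝ)}.Finite := htrans (fun x => x < (r : ℝ)) hfin
          have hev' : ∀ᶠ n in atTop, (r : ℝ) ≤ u n := by
            filter_upwards [hev _ hfin'] with n hn
            exact le_of_not_gt hn
          have : (r : ℝ) ≤ liminf u atTop :=
            le_liminf_of_le hbdd1.isCoboundedUnder_ge hev'
          linarith
        · -- limsup ≤ R, contradiction with hR2
          rw [hq2] at hfin
          have hfin' : {n | (R : ℝ) < u n}.Finite := htrans (fun x => (R : ℝ) < x) hfin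
          have hev' : ∀ᶠ n in atTop, u n ≤ (R : ℝ) := by
            filter_upwards [hev _ hfin'] with n hn
            exact le_of_not_gt hn
          have : limsup u atTop ≤ (R : ℝ) :=
            limsup_le_of_le hbdd2.isCoboundedUnder_le hev'
          linarith
      · -- independence contradicts H
        apply H
        obtain ⟨ψ, hψ, hind⟩ := hindep
        refine ⟨ψ, hψ, r, R, by linarith, ?_⟩
        rw [hq1, hq2] at hind
        exact hind
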